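/- Let n ≥ 1 and let A and B be n×n complex matrices such that Re⟨(A+B)g, g⟩ < 0 for every nonzero g ∈ ℂⁿ. Then for every g ∈ ℂⁿ there exists t₀ > 0 such that for all t with 0 < t ≤ t₀ one has ‖exp((t/2)B)·exp(tA)·exp((t/2)B)·g‖ ≤ ‖g‖; i.e., the symmetric operator-exponential scheme S₂(t) = exp((t/2)B)exp(tA)exp((t/2)B) is stable for sufficiently small positive time steps. -/

import Mathlib

set_option synthInstance.maxHeartbeats 1000000
set_option maxHeartbeats 1000000

open NormedSpace Matrix

theorem symmetric_scheme_stable (n : ℕ) (hn : 1 ≤ n)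
    (A B : Matrix (Fin n) (Fin n) ℂ)
    (h : ∀ g : EuclideanSpace ℂ (Fin n), g ≠ 0 →
      (inner ℂ (Matrix.toEuclideanLin (A + B) g) g : ℂ).re < 0) :
    ∀ g : EuclideanSpace ℂ (Fin n), ∃ t₀ > (0 : ℝ), ∀ t : ℝ, 0 < t → t ≤ t₀ →
      ‖Matrix.toEuclideanLin
          (NormedSpace.exp (((t : ℂ) / 2) • B) * NormedSpace.exp ((t : ℂ) • A) *
            NormedSpace.exp (((t : ℂ) / 2) • B)) g‖ ≤ ‖g‖ := by
  intro g
  by_cases hg : g = 0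
  · exact ⟨1, one_pos, fun t _ _ => by simp [hg]⟩
  -- setup
  set A' := Matrix.toEuclideanCLM (𝕜 := ℂ) A with hA'
  set B₂ := Matrix.toEuclideanCLM (𝕜 := ℂ) ((2⁻¹ : ℂ) • B) with hB₂
  have hofr : HasDerivAt (fun t : ℝ => (t:ℂ)) 1 0 := by
    simpa using (hasDerivAt_id (0:ℝ)).ofReal_comp
  have hzero : ∀ X : EuclideanSpace ℂ (Fin n) →L[ℂ] EuclideanSpace ℂ (Fin n),
      exp ((((0:ℝ)):ℂ) • X) = 1 := by
    intro X
    have h0 : (((0:ℝ)):ℂ) • X = 0 := by rw [Complex.ofReal_zero]; exact zero_smul ℂ X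
    rw [h0, exp_zero]
  have derivC : ∀ X : EuclideanSpace ℂ (Fin n) →L[ℂ] EuclideanSpace ℂ (Fin n),
      HasDerivAt (fun t : ℝ => exp ((t:ℂ) • X)) X 0 := by
    intro X
    have h1 : HasDerivAt (fun z : ℂ => exp (z • X)) X (((0:ℝ):ℂ)) := by
      have := hasDerivAt_exp_smul_const X (0:ℂ)
      simpa using this.congr_deriv (by simp [Algebra.smul_def])
    simpa [Function.comp_def] using h1.scomp (0:ℝ) hofr
  set F : ℝ → (EuclideanSpace ℂ (Fin n) →L[ℂ] EuclideanSpace ℂ (Fin n)) :=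
    fun t => exp ((t:ℂ) • B₂) * exp ((t:ℂ) • A') * exp ((t:ℂ) • B₂) with hF
  have derivF : HasDerivAt F (Matrix.toEuclideanCLM (𝕜 := ℂ) (A + B)) 0 := by
    have h2 := ((derivC B₂).mul (derivC A')).mul (derivC B₂)
    simp only [hzero, one_mul, mul_one, Pi.mul_apply] at h2
    refine h2.congr_deriv (Eq.symm ?_)
    rw [_root_.map_add, hB₂]
    rw [show Matrix.toEuclideanCLM (𝕜 := ℂ) ((2⁻¹ : ℂ) • B)
        = (2⁻¹ : ℂ) • Matrix.toEuclideanCLM (𝕜 := ℂ) B from map_smul _ _ _]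
    module
  set u : ℝ → EuclideanSpace ℂ (Fin n) := fun t => F t g with hu
  have u0 : u 0 = g := by
    simp only [hu, hF, hzero, one_mul]
    simp
  set v : EuclideanSpace ℂ (Fin n) := Matrix.toEuclideanCLM (𝕜 := ℂ) (A + B) g with hv
  have derivU : HasDerivAt u v 0 := by
    have hL := ((ContinuousLinearMap.apply ℂ
        (EuclideanSpace ℂ (Fin n)) g).restrictScalars ℝ).hasFDerivAt.comp_hasDerivAt 0 derivF
    exact hL
  have derivInner : HasDerivAt (fun t => (inner ℂ (u t) (u t) : ℂ))
      ((inner ℂ g v : ℂ) + (inner ℂ v g : ℂ)) 0 := by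
    simpa [u0] using derivU.inner ℂ derivU
  set d : ℝ := ((inner ℂ g v : ℂ) + (inner ℂ v g : ℂ)).re with hd
  have derivPhi : HasDerivAt (fun t => ‖u t‖ ^ 2) d 0 := by
    have h3 := Complex.reCLM.hasFDerivAt.comp_hasDerivAt 0 derivInner
    have heq : (fun t => ‖u t‖ ^ 2) = fun t => Complex.reCLM (inner ℂ (u t) (u t) : ℂ) := by
      ext t
      simp [← inner_self_eq_norm_sq (𝕜 := ℂ) (u t)]
    rw [heq]
    exact h3
  have hdneg : d < 0 := by
    have hre : (inner ℂ v g : ℂ).re < 0 := by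
      have := h g hg
      have hveq : v = Matrix.toEuclideanLin (A + B) g := rfl
      rwa [hveq]
    have hsymm : (inner ℂ g v : ℂ).re = (inner ℂ v g : ℂ).re := by
      rw [← inner_conj_symm v g, Complex.conj_re]
    rw [hd, Complex.add_re]
    linarith
  -- extract a neighborhood where the slope is negative
  have hslope := hasDerivAt_iff_tendsto_slope.mp derivPhi
  have ev : ∀ᶠ t in nhdsWithin 0 {(0:ℝ)}ᶜ, slope (fun t => ‖u t‖ ^ 2) 0 t < 0 :=
    hslope.eventually (gt_mem_nhds hdneg)
  rw [eventually_nhdsWithin_iff, Metric.eventually_nhds_iff] at ev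
  obtain ⟨δ, hδ, H⟩ := ev
  refine ⟨δ / 2, by linarith, fun t ht htδ => ?_⟩
  have hkey : Matrix.toEuclideanLin
      (exp (((t : ℂ) / 2) • B) * exp ((t : ℂ) • A) * exp (((t : ℂ) / 2) • B)) g = u t := by
    letI : SeminormedRing (Matrix (Fin n) (Fin n) ℂ) := Matrix.linftyOpSemiNormedRing
    letI : NormedRing (Matrix (Fin n) (Fin n) ℂ) := Matrix.linftyOpNormedRing
    letI : NormedAlgebra ℂ (Matrix (Fin n) (Fin n) ℂ) := Matrix.linftyOpNormedAlgebra
    letI : NormedAlgebra ℚ (Matrix (Fin n) (Fin n) ℂ) := Matrix.linftyOpNormedAlgebra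
    have cont : Continuous (Matrix.toEuclideanCLM (𝕜 := ℂ) (n := Fin n)) :=
      LinearMap.continuous_of_finiteDimensional
        { toFun := Matrix.toEuclideanCLM (𝕜 := ℂ) (n := Fin n),
          map_add' := fun x y => map_add _ x y,
          map_smul' := fun c x => map_smul _ c x }
    have hBhalf : ((t : ℂ) / 2) • B = (t : ℂ) • ((2⁻¹ : ℂ) • B) := by
      rw [smul_smul, div_eq_mul_inv]
    have hcoe : Matrix.toEuclideanLin
        (exp (((t : ℂ) / 2) • B) * exp ((t : ℂ) • A) * exp (((t : ℂ) / 2) • B)) g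
        = Matrix.toEuclideanCLM (𝕜 := ℂ)
        (exp (((t : ℂ) / 2) • B) * exp ((t : ℂ) • A) * exp (((t : ℂ) / 2) • B)) g := rfl
    rw [hcoe, _root_.map_mul, _root_.map_mul, hBhalf]
    have e1 := map_exp _ cont ((t:ℂ) • ((2⁻¹:ℂ) • B))
    have e2 := map_exp _ cont ((t:ℂ) • A)
    erw [e1, e2]
    rw [
      show (Matrix.toEuclideanCLM (𝕜 := ℂ)) ((t:ℂ) • ((2⁻¹:ℂ) • B)) = (t:ℂ) • B₂ from
        map_smul _ _ _,
      show (Matrix.toEuclideanCLM (𝕜 := ℂ)) ((t:ℂ) • A) = (t:ℂ) • A' from map_smul _ _ _]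
  rw [hkey]
  -- conclude from the negative slope
  have hts : slope (fun t => ‖u t‖ ^ 2) 0 t < 0 := by
    apply H
    · rw [Real.dist_eq, sub_zero, abs_of_pos ht]; linarith
    · simpa using ne_of_gt ht
  rw [slope_def_field] at hts
  have hphi : ‖u t‖ ^ 2 < ‖u 0‖ ^ 2 := by
    rw [sub_zero] at hts
    rcases div_neg_iff.mp hts with ⟨h1, h2⟩ | ⟨h1, h2⟩
    · linarith
    · nlinarith
  rw [u0] at hphi
  nlinarith [norm_nonneg (u t), norm_nonneg g, hphi]
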